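/- The Gomory–Hu-tree-based greedy algorithm (run the tree greedy on H and output the union of the corresponding cuts in G) yields a cut of weight at most (2 − 2/q) times the optimum of Single-to-Single on arbitrary graphs. -/

import Mathlib

open scoped Classical

set_option linter.unusedSectionVars false
set_option linter.unusedVariables false

/-- The set of edges of `G` with exactly one endpoint in `S`. -/
noncomputable def boundary {V : Type*} [Fintype V] [DecidableEq V]
    (G : SimpleGraph V) (S : Set V) : Finset (Sym2 V) :=
  Finset.univ.filter (fun e => e ∈ G.edgeSet ∧ ∃ u ∈ S, ∃ v ∈ Sᶜ, e = s(u, v))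

section helpers
variable {V : Type*} [Fintype V] [DecidableEq V]

variable {V : Type*} [Fintype V] [DecidableEq V]

lemma sym2_rep (e : Sym2 V) : ∃ x y, e = s(x, y) :=
  Sym2.inductionOn e fun x y => ⟨x, y, rfl⟩

lemma boundary_elim {G : SimpleGraph V} {S : Set V} {e : Sym2 V}
    (he : e ∈ boundary G S) :
    e ∈ G.edgeSet ∧ ∃ u ∈ S, ∃ v ∈ Sᶜ, e = s(u, v) :=
  (Finset.mem_filter.mp he).2

lemma boundary_subset_edgeSet (G : SimpleGraph V) (S : Set V) :
    ↑(boundary G S) ⊆ G.edgeSet := by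
  intro e he
  rw [Finset.mem_coe, boundary, Finset.mem_filter] at he
  exact he.2.1

lemma mem_boundary (G : SimpleGraph V) (S : Set V) {u v : V}
    (h : G.Adj u v) (hu : u ∈ S) (hv : v ∉ S) : s(u, v) ∈ boundary G S := by
  rw [boundary, Finset.mem_filter]
  exact ⟨Finset.mem_univ _, G.mem_edgeSet.mpr h, u, hu, v, hv, rfl⟩

lemma boundary_sep (G : SimpleGraph V) (S : Set V) {u v : V}
    (hu : u ∈ S) (hv : v ∉ S)
    (h : (G.deleteEdges ↑(boundary G S)).Reachable u v) : False := by
  have key : ∀ {x y : V} (_ : (G.deleteEdges ↑(boundary G S)).Walk x y),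
      x ∈ S → y ∈ S := by
    intro x y p
    induction p with
    | nil => exact id
    | @cons a c d hadj p ih =>
      intro hx
      apply ih
      by_contra hc
      rw [SimpleGraph.deleteEdges_adj] at hadj
      exact hadj.2 (Finset.mem_coe.mpr (mem_boundary G S hadj.1 hx hc))
  obtain ⟨p⟩ := h
  exact hv (key p hu)

lemma walk_split {H : SimpleGraph V} {a c : V} {u v : V} (p : H.Walk u v)
    (hp : p.IsPath) (he : s(a, c) ∈ p.edges) :
    ((H.deleteEdges {s(a, c)}).Reachable u a ∧ (H.deleteEdges {s(a, c)}).Reachable c v) ∨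
    ((H.deleteEdges {s(a, c)}).Reachable u c ∧ (H.deleteEdges {s(a, c)}).Reachable a v) := by
  induction p with
  | nil => simp at he
  | @cons x z y h p ih =>
    rw [SimpleGraph.Walk.cons_isPath_iff] at hp
    rw [SimpleGraph.Walk.edges_cons, List.mem_cons] at he
    rcases he with he | he
    · have hnot : ∀ e ∈ p.edges, e ∉ ({s(a, c)} : Set (Sym2 V)) := by
        intro e hep hee
        rw [Set.mem_singleton_iff] at hee
        subst hee
        exact hp.2 (SimpleGraph.Walk.fst_mem_support_of_mem_edges p (he ▸ hep))
      have reach : (H.deleteEdges {s(a, c)}).Reachable z y := ⟨p.toDeleteEdges _ hnot⟩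
      rcases Sym2.eq_iff.mp he with ⟨rfl, rfl⟩ | ⟨rfl, rfl⟩
      · exact Or.inl ⟨SimpleGraph.Reachable.refl _, reach⟩
      · exact Or.inr ⟨SimpleGraph.Reachable.refl _, reach⟩
    · have hxz : s(a, c) ≠ s(x, z) := by
        intro hh
        exact hp.2 (SimpleGraph.Walk.fst_mem_support_of_mem_edges p (hh ▸ he))
      have hadj : (H.deleteEdges {s(a, c)}).Adj x z := by
        rw [SimpleGraph.deleteEdges_adj]
        exact ⟨h, by simpa using (Ne.symm hxz)⟩
      rcases ih hp.1 he with ⟨h1, h2⟩ | ⟨h1, h2⟩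
      · exact Or.inl ⟨hadj.reachable.trans h1, h2⟩
      · exact Or.inr ⟨hadj.reachable.trans h1, h2⟩

lemma tree_bridge {H : SimpleGraph V} (hH : H.IsAcyclic) {a c : V} (h : H.Adj a c) :
    ¬(H.deleteEdges {s(a, c)}).Reachable a c :=
  (SimpleGraph.isBridge_iff).mp (SimpleGraph.isAcyclic_iff_forall_adj_isBridge.mp hH h)

lemma side_cover {H : SimpleGraph V} (hconn : H.Connected) {x y : V} (hxy : H.Adj x y)
    (v : V) :
    (H.deleteEdges {s(x, y)}).Reachable x v ∨ (H.deleteEdges {s(x, y)}).Reachable y v := by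
  obtain ⟨w0⟩ := hconn.preconnected x v
  by_cases hm : s(x, y) ∈ (w0.toPath : H.Walk x v).edges
  · rcases walk_split _ w0.toPath.2 hm with ⟨h1, h2⟩ | ⟨h1, h2⟩
    · exact Or.inr h2
    · exact Or.inl h2
  · refine Or.inl ⟨(w0.toPath : H.Walk x v).toDeleteEdges _ ?_⟩
    intro e hep hee
    rw [Set.mem_singleton_iff] at hee
    exact hm (hee ▸ hep)

lemma reach_mono {G : SimpleGraph V} {s s' : Set (Sym2 V)} (h : s ⊆ s') {u v : V}
    (hr : (G.deleteEdges s').Reachable u v) : (G.deleteEdges s).Reachable u v :=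
  hr.mono (SimpleGraph.deleteEdges_anti h)

lemma sum_biUnion_le' {α β : Type*} [DecidableEq β] (s : Finset α) (f : α → Finset β)
    (g : β → ℝ) (hg : ∀ x, 0 ≤ g x) :
    ∑ x ∈ s.biUnion f, g x ≤ ∑ a ∈ s, ∑ x ∈ f a, g x := by
  induction s using Finset.induction with
  | empty => simp
  | @insert a t ha ih =>
    rw [Finset.biUnion_insert, Finset.sum_insert ha]
    have h1 : f a ∪ t.biUnion f = f a ∪ (t.biUnion f \ f a) := by
      rw [Finset.union_sdiff_self_eq_union]
    rw [h1, Finset.sum_union Finset.disjoint_sdiff]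
    have h2 : ∑ x ∈ t.biUnion f \ f a, g x ≤ ∑ x ∈ t.biUnion f, g x :=
      Finset.sum_le_sum_of_subset_of_nonneg (Finset.sdiff_subset) (fun x _ _ => hg x)
    linarith


lemma key_lemma {H : SimpleGraph V} (hH : H.IsTree) (wH : Sym2 V → ℝ)
    {ι : Type*} [DecidableEq ι] (t : ι → V) (b : ι → ℝ) :
    ∀ s : Finset ι, s.Nonempty →
      (∀ i ∈ s, ∀ j ∈ s, i ≠ j → ∀ p : H.Walk (t i) (t j), p.IsPath →
        ∃ e ∈ p.edges, wH e ≤ min (b i) (b j)) →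
      ∃ F' : Finset (Sym2 V), ↑F' ⊆ H.edgeSet ∧ F'.card = s.card - 1 ∧
        (∀ i ∈ s, ∀ j ∈ s, i ≠ j → ¬(H.deleteEdges ↑F').Reachable (t i) (t j)) ∧
        (∀ e ∈ F', ∃ i ∈ s, ∃ j ∈ s, i ≠ j ∧
          ¬(H.deleteEdges {e}).Reachable (t i) (t j)) ∧
        (∀ m ∈ s, (∀ i ∈ s, b i ≤ b m) →
          ∑ e ∈ F', wH e ≤ ∑ i ∈ s, b i - b m) := by
  intro s
  induction s using Finset.strongInduction with
  | _ s IH =>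
  intro hne hpair
  by_cases hcard : s.card ≤ 1
  · -- singleton case
    obtain ⟨i1, rfl⟩ := Finset.card_eq_one.mp (le_antisymm hcard hne.card_pos)
    refine ⟨∅, by simp, by simp, ?_, by simp, ?_⟩
    · intro i hi j hj hij
      rw [Finset.mem_singleton] at hi hj
      exact absurd (hi.trans hj.symm) hij
    · intro m hm _
      rw [Finset.mem_singleton] at hm
      subst hm
      simp
  · push_neg at hcard
    obtain ⟨jm, hjms, hjmax⟩ := Finset.exists_max_image s b hne
    obtain ⟨i0, hi0s, hi0ne⟩ := Finset.exists_mem_ne hcard jm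
    obtain ⟨w0⟩ := hH.isConnected.preconnected (t i0) (t jm)
    obtain ⟨e0, he0p, he0w⟩ :=
      hpair i0 hi0s jm hjms hi0ne (w0.toPath : H.Walk _ _) w0.toPath.2
    have he0E : e0 ∈ H.edgeSet := SimpleGraph.Walk.edges_subset_edgeSet _ he0p
    obtain ⟨x, y, rfl⟩ := sym2_rep e0
    have hadj : H.Adj x y := H.mem_edgeSet.mp he0E
    have hbr : ¬(H.deleteEdges {s(x, y)}).Reachable x y := tree_bridge hH.IsAcyclic hadj
    set R := fun u v => (H.deleteEdges {s(x, y)}).Reachable u v with hR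
    -- orient: x' on side of i0, y' on side of jm
    obtain ⟨x', y', hswap, hru, hrv⟩ :
        ∃ x' y', s(x', y') = s(x, y) ∧ R (t i0) x' ∧ R y' (t jm) := by
      rcases walk_split (a := x) (c := y) (w0.toPath : H.Walk (t i0) (t jm)) w0.toPath.2 he0p with ⟨h1, h2⟩ | ⟨h1, h2⟩
      · exact ⟨x, y, rfl, h1, h2⟩
      · exact ⟨y, x, Sym2.eq_swap, h1, h2⟩
    have hbr' : ¬R x' y' := by
      rcases Sym2.eq_iff.mp hswap with ⟨rfl, rfl⟩ | ⟨rfl, rfl⟩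
      · exact hbr
      · exact fun hh => hbr hh.symm
    have hcover : ∀ v, ¬R x' v → R y' v := by
      intro v hv
      have hc := side_cover hH.isConnected hadj v
      rcases Sym2.eq_iff.mp hswap with ⟨rfl, rfl⟩ | ⟨rfl, rfl⟩
      · exact hc.resolve_left hv
      · exact hc.resolve_right hv
    set A := s.filter (fun i => R x' (t i)) with hA
    set B := s.filter (fun i => ¬R x' (t i)) with hB
    have hi0A : i0 ∈ A := Finset.mem_filter.mpr ⟨hi0s, hru.symm⟩
    have hjmB : jm ∈ B := by
      refine Finset.mem_filter.mpr ⟨hjms, fun hx' => hbr' ?_⟩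
      exact hx'.trans hrv.symm
    have hAsub : A ⊂ s := Finset.ssubset_iff_of_subset (Finset.filter_subset _ _)
      |>.mpr ⟨jm, hjms, fun hmem => (Finset.mem_filter.mp hjmB).2 (Finset.mem_filter.mp hmem).2⟩
    have hBsub : B ⊂ s := Finset.ssubset_iff_of_subset (Finset.filter_subset _ _)
      |>.mpr ⟨i0, hi0s, fun hmem => (Finset.mem_filter.mp hmem).2 (Finset.mem_filter.mp hi0A).2⟩
    have hApair : ∀ i ∈ A, ∀ j ∈ A, i ≠ j → ∀ p : H.Walk (t i) (t j), p.IsPath →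
        ∃ e ∈ p.edges, wH e ≤ min (b i) (b j) := fun i hi j hj =>
      hpair i (Finset.filter_subset _ _ hi) j (Finset.filter_subset _ _ hj)
    have hBpair : ∀ i ∈ B, ∀ j ∈ B, i ≠ j → ∀ p : H.Walk (t i) (t j), p.IsPath →
        ∃ e ∈ p.edges, wH e ≤ min (b i) (b j) := fun i hi j hj =>
      hpair i (Finset.filter_subset _ _ hi) j (Finset.filter_subset _ _ hj)
    obtain ⟨FA, hFAE, hFAcard, hFAsep, hFAinv, hFAsum⟩ :=
      IH A hAsub ⟨i0, hi0A⟩ hApair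
    obtain ⟨FB, hFBE, hFBcard, hFBsep, hFBinv, hFBsum⟩ :=
      IH B hBsub ⟨jm, hjmB⟩ hBpair
    -- edges of FA / FB live on the corresponding side
    have side_claim : ∀ (z0 : V) (F0 : Finset (Sym2 V)) (grp : Finset ι),
        (∀ i ∈ grp, R z0 (t i)) →
        (∀ e ∈ F0, ∃ i ∈ grp, ∃ j ∈ grp, i ≠ j ∧
          ¬(H.deleteEdges {e}).Reachable (t i) (t j)) →
        ∀ e ∈ F0, ∀ u v : V, e = s(u, v) → R z0 u ∧ R z0 v := by
      intro z0 F0 grp hgrp hinv e heF u v hee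
      subst hee
      obtain ⟨i, hi, j, hj, hij, hsep⟩ := hinv _ heF
      have r1 : R z0 (t i) := hgrp i hi
      have r2 : R z0 (t j) := hgrp j hj
      obtain ⟨wk⟩ := r1.symm.trans r2
      have hwk' : ∀ e ∈ wk.edges, e ∈ H.edgeSet := fun e he =>
        SimpleGraph.edgeSet_mono (SimpleGraph.deleteEdges_le _)
          (SimpleGraph.Walk.edges_subset_edgeSet wk he)
      set wk' := wk.transfer H hwk' with hwk'def
      have hq : s(u, v) ∈ (wk'.toPath : H.Walk (t i) (t j)).edges := by
        by_contra hq
        refine hsep ⟨(wk'.toPath : H.Walk (t i) (t j)).toDeleteEdges _ ?_⟩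
        intro e hep hee
        rw [Set.mem_singleton_iff] at hee
        exact hq (hee ▸ hep)
      have hqw : s(u, v) ∈ wk'.edges := SimpleGraph.Walk.edges_toPath_subset _ hq
      rw [hwk'def, SimpleGraph.Walk.edges_transfer] at hqw
      have hu : u ∈ wk.support := SimpleGraph.Walk.fst_mem_support_of_mem_edges _ hqw
      have hv : v ∈ wk.support := SimpleGraph.Walk.snd_mem_support_of_mem_edges _ hqw
      exact ⟨r1.trans ⟨wk.takeUntil u hu⟩, r1.trans ⟨wk.takeUntil v hv⟩⟩
    have claimA : ∀ e ∈ FA, ∀ u v : V, e = s(u, v) → R x' u ∧ R x' v :=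
      side_claim x' FA A (fun i hi => (Finset.mem_filter.mp hi).2) hFAinv
    have claimB : ∀ e ∈ FB, ∀ u v : V, e = s(u, v) → R y' u ∧ R y' v :=
      side_claim y' FB B (fun i hi => hcover _ (Finset.mem_filter.mp hi).2) hFBinv
    have hopp : ∀ z : V, R x' z → R y' z → False := fun z h1 h2 =>
      hbr' (h1.trans h2.symm)
    have hABdisj : Disjoint FA FB := by
      rw [Finset.disjoint_left]
      intro e heA heB
      obtain ⟨u, v, rfl⟩ := sym2_rep e
      exact hopp u (claimA _ heA u v rfl).1 (claimB _ heB u v rfl).1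
    have hxy'cases := Sym2.eq_iff.mp hswap
    have he0A : s(x, y) ∉ FA := by
      intro hmem
      obtain ⟨h1, h2⟩ := claimA _ hmem x y rfl
      rcases hxy'cases with ⟨rfl, rfl⟩ | ⟨rfl, rfl⟩
      · exact hbr h2
      · exact hbr h1.symm
    have he0B : s(x, y) ∉ FB := by
      intro hmem
      obtain ⟨h1, h2⟩ := claimB _ hmem x y rfl
      rcases hxy'cases with ⟨rfl, rfl⟩ | ⟨rfl, rfl⟩
      · exact hbr h1.symm
      · exact hbr h2
    have he0U : s(x, y) ∉ FA ∪ FB := by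
      rw [Finset.mem_union]; tauto
    refine ⟨insert (s(x, y)) (FA ∪ FB), ?_, ?_, ?_, ?_, ?_⟩
    · -- subset of edgeSet
      intro e he
      rw [Finset.coe_insert, Set.mem_insert_iff] at he
      rcases he with rfl | he
      · exact he0E
      · rw [Finset.mem_coe, Finset.mem_union] at he
        rcases he with he | he
        · exact hFAE he
        · exact hFBE he
    · -- cardinality
      rw [Finset.card_insert_of_notMem he0U, Finset.card_union_of_disjoint hABdisj,
        hFAcard, hFBcard]
      have h1 : 1 ≤ A.card := Finset.card_pos.mpr ⟨i0, hi0A⟩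
      have h2 : 1 ≤ B.card := Finset.card_pos.mpr ⟨jm, hjmB⟩
      have h3 : A.card + B.card = s.card := by
        rw [hA, hB]
        exact Finset.card_filter_add_card_filter_not _
      omega
    · -- separation
      intro i hi j hj hij hreach
      have hFA' : (↑FA : Set (Sym2 V)) ⊆ ↑(insert (s(x, y)) (FA ∪ FB)) := by
        intro e he
        simp only [Finset.coe_insert, Set.mem_insert_iff, Finset.mem_coe,
          Finset.mem_union] at *
        tauto
      have hFB' : (↑FB : Set (Sym2 V)) ⊆ ↑(insert (s(x, y)) (FA ∪ FB)) := by
        intro e he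
        simp only [Finset.coe_insert, Set.mem_insert_iff, Finset.mem_coe,
          Finset.mem_union] at *
        tauto
      have he0' : ({s(x, y)} : Set (Sym2 V)) ⊆ ↑(insert (s(x, y)) (FA ∪ FB)) := by
        intro e he
        rw [Set.mem_singleton_iff] at he
        subst he
        simp
      have hiAB : i ∈ A ∨ i ∈ B := by
        rw [hA, hB, Finset.mem_filter, Finset.mem_filter]; tauto
      have hjAB : j ∈ A ∨ j ∈ B := by
        rw [hA, hB, Finset.mem_filter, Finset.mem_filter]; tauto
      have hR' : R (t i) (t j) := reach_mono he0' hreach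
      rcases hiAB with hiA | hiB <;> rcases hjAB with hjA | hjB
      · exact hFAsep i hiA j hjA hij (reach_mono hFA' hreach)
      · exact (Finset.mem_filter.mp hjB).2 (((Finset.mem_filter.mp hiA).2).trans hR')
      · exact (Finset.mem_filter.mp hiB).2 (((Finset.mem_filter.mp hjA).2).trans hR'.symm)
      · exact hFBsep i hiB j hjB hij (reach_mono hFB' hreach)
    · -- invariant
      intro e he
      rw [Finset.mem_insert, Finset.mem_union] at he
      rcases he with rfl | he | he
      · refine ⟨i0, hi0s, jm, hjms, hi0ne, fun hr => ?_⟩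
        exact (Finset.mem_filter.mp hjmB).2 (((Finset.mem_filter.mp hi0A).2).trans hr)
      · obtain ⟨i, hi, j, hj, hij, hs⟩ := hFAinv e he
        exact ⟨i, Finset.filter_subset _ _ hi, j, Finset.filter_subset _ _ hj, hij, hs⟩
      · obtain ⟨i, hi, j, hj, hij, hs⟩ := hFBinv e he
        exact ⟨i, Finset.filter_subset _ _ hi, j, Finset.filter_subset _ _ hj, hij, hs⟩
    · -- sum bound
      intro m hm hmmax
      rw [Finset.sum_insert he0U, Finset.sum_union hABdisj]
      obtain ⟨mA, hmA, hmAmax⟩ := Finset.exists_max_image A b ⟨i0, hi0A⟩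
      obtain ⟨mB, hmB, hmBmax⟩ := Finset.exists_max_image B b ⟨jm, hjmB⟩
      have bA := hFAsum mA hmA hmAmax
      have bB := hFBsum mB hmB hmBmax
      have hsplitsum : ∑ i ∈ A, b i + ∑ i ∈ B, b i = ∑ i ∈ s, b i := by
        rw [hA, hB]
        exact Finset.sum_filter_add_sum_filter_not _ _ _
      have hw1 : wH s(x, y) ≤ b i0 := he0w.trans (min_le_left _ _)
      have hw2 : wH s(x, y) ≤ b jm := he0w.trans (min_le_right _ _)
      have hbi0 : b i0 ≤ b mA := hmAmax i0 hi0A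
      have hbjm : b jm ≤ b mB := hmBmax jm hjmB
      have hmAB : m ∈ A ∨ m ∈ B := by
        rw [hA, hB, Finset.mem_filter, Finset.mem_filter]; tauto
      rcases hmAB with hmA' | hmB'
      · have : b m ≤ b mA := hmAmax m hmA'
        linarith
      · have : b m ≤ b mB := hmBmax m hmB'
        linarith


end helpers

/-- The Gomory–Hu based greedy algorithm for Single-to-Single: let `H` be a
Gomory–Hu tree of `G` (each tree edge `s(a,b)` corresponds to the cut
`U s(a,b)` of `G` given by the boundary of one side of `H - s(a,b)`, of weight
`wH s(a,b)`, and min cuts of `G` are witnessed on tree paths), and let `F` be a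
minimum `wH`-weight good cut of size `q - 1` on `H` (the output of the tree
greedy). Then the union `⋃_{e ∈ F} U e` is a feasible Single-to-Single cut of
weight at most `(2 - 2/q)` times that of any feasible solution. -/
theorem stmt5 {V : Type*} [Fintype V] [DecidableEq V] (G H : SimpleGraph V)
    (w wH : Sym2 V → ℝ) (hw : ∀ e, 0 ≤ w e) (hH : H.IsTree)
    (U : Sym2 V → Finset (Sym2 V))
    (hside : ∀ a b : V, H.Adj a b →
      U s(a, b) = boundary G {v | (H.deleteEdges {s(a, b)}).Reachable a v} ∧
      ∑ e ∈ U s(a, b), w e = wH s(a, b))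
    (hGHpath : ∀ u v : V, ∀ p : H.Walk u v, p.IsPath →
      ∀ D : Finset (Sym2 V), ↑D ⊆ G.edgeSet →
        ¬ (G.deleteEdges (↑D : Set (Sym2 V))).Reachable u v →
        ∃ e ∈ p.edges, wH e ≤ ∑ e' ∈ D, w e')
    (q : ℕ) (hq : 1 ≤ q) (T : Fin q → Set V)
    (F : Finset (Sym2 V)) (hFE : ↑F ⊆ H.edgeSet) (hFcard : F.card = q - 1)
    (hFgood : ∃ t : Fin q → V, (∀ i, t i ∈ T i) ∧
      ∀ i j, i ≠ j → ¬ (H.deleteEdges ↑F).Reachable (t i) (t j))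
    (hFmin : ∀ F' : Finset (Sym2 V), ↑F' ⊆ H.edgeSet → F'.card = q - 1 →
      (∃ t : Fin q → V, (∀ i, t i ∈ T i) ∧
        ∀ i j, i ≠ j → ¬ (H.deleteEdges ↑F').Reachable (t i) (t j)) →
      ∑ e ∈ F, wH e ≤ ∑ e ∈ F', wH e) :
    (∃ t : Fin q → V, (∀ i, t i ∈ T i) ∧
      ∀ i j, i ≠ j → ¬ (G.deleteEdges ↑(F.biUnion U)).Reachable (t i) (t j)) ∧
    (∀ (t' : Fin q → V) (C : Finset (Sym2 V)), (∀ i, t' i ∈ T i) → ↑C ⊆ G.edgeSet →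
      (∀ i j, i ≠ j → ¬ (G.deleteEdges ↑C).Reachable (t' i) (t' j)) →
      ∑ e ∈ F.biUnion U, w e ≤ (2 - 2 / (q : ℝ)) * ∑ e ∈ C, w e) := by
  constructor
  · -- feasibility
    obtain ⟨t, htT, htsep⟩ := hFgood
    refine ⟨t, htT, ?_⟩
    intro i j hij hreach
    obtain ⟨w0⟩ := hH.isConnected.preconnected (t i) (t j)
    have hpF : ∃ e ∈ (w0.toPath : H.Walk (t i) (t j)).edges, e ∈ F := by
      by_contra h
      push_neg at h
      exact htsep i j hij ⟨(w0.toPath : H.Walk (t i) (t j)).toDeleteEdges ↑F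
        (fun e he hee => h e he (Finset.mem_coe.mp hee))⟩
    obtain ⟨e, hep, heF⟩ := hpF
    obtain ⟨a, c, rfl⟩ := sym2_rep e
    have hadj : H.Adj a c := H.mem_edgeSet.mp (hFE (Finset.mem_coe.mpr heF))
    have hbr : ¬(H.deleteEdges {s(a, c)}).Reachable a c := tree_bridge hH.IsAcyclic hadj
    set S := {v | (H.deleteEdges {s(a, c)}).Reachable a v} with hS
    have hUB : U s(a, c) = boundary G S := (hside a c hadj).1
    have hsub : (↑(U s(a, c)) : Set (Sym2 V)) ⊆ ↑(F.biUnion U) :=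
      Finset.coe_subset.mpr (Finset.subset_biUnion_of_mem U heF)
    have hreach' : (G.deleteEdges ↑(boundary G S)).Reachable (t i) (t j) := by
      rw [← hUB]
      exact reach_mono hsub hreach
    rcases walk_split (w0.toPath : H.Walk (t i) (t j)) w0.toPath.2 hep with ⟨h1, h2⟩ | ⟨h1, h2⟩
    · have hiS : t i ∈ S := h1.symm
      have hjS : t j ∉ S := fun hj => hbr (hj.trans h2.symm)
      exact boundary_sep G S hiS hjS hreach'
    · have hjS : t j ∈ S := h2
      have hiS : t i ∉ S := fun hi => hbr (hi.trans h1)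
      exact boundary_sep G S hjS hiS hreach'.symm
  · -- approximation bound
    intro t' C ht'T hCE hsep
    set Vv : Fin q → Set V := fun i => {v | (G.deleteEdges ↑C).Reachable (t' i) v} with hVv
    set Bi : Fin q → Finset (Sym2 V) := fun i => boundary G (Vv i) with hBi
    set b : Fin q → ℝ := fun i => ∑ e ∈ Bi i, w e with hb
    have hBC : ∀ i, Bi i ⊆ C := by
      intro i e he
      obtain ⟨heG, u, huV, v, hvV, rfl⟩ := boundary_elim (G := G) (S := Vv i) he
      by_contra heC
      exact hvV (huV.trans (SimpleGraph.Adj.reachable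
        (SimpleGraph.deleteEdges_adj.mpr ⟨G.mem_edgeSet.mp heG, fun hh => heC hh⟩)))
    have hBsep : ∀ i j, i ≠ j → ¬(G.deleteEdges ↑(Bi i)).Reachable (t' i) (t' j) := by
      intro i j hij hr
      exact boundary_sep G (Vv i) (SimpleGraph.Reachable.refl _) (hsep i j hij) hr
    -- pair hypothesis
    have hpair : ∀ i ∈ (Finset.univ : Finset (Fin q)), ∀ j ∈ (Finset.univ : Finset (Fin q)),
        i ≠ j → ∀ p : H.Walk (t' i) (t' j), p.IsPath →
        ∃ e ∈ p.edges, wH e ≤ min (b i) (b j) := by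
      intro i _ j _ hij p hp
      obtain ⟨e1, he1p, he1w⟩ := hGHpath _ _ p hp (Bi i)
        (boundary_subset_edgeSet G (Vv i)) (hBsep i j hij)
      obtain ⟨e2, he2p, he2w⟩ := hGHpath _ _ p hp (Bi j)
        (boundary_subset_edgeSet G (Vv j)) (fun hr => hBsep j i (Ne.symm hij) hr.symm)
      obtain ⟨e0, he0m, he0min⟩ := Finset.exists_min_image p.edges.toFinset wH
        ⟨e1, List.mem_toFinset.mpr he1p⟩
      refine ⟨e0, List.mem_toFinset.mp he0m, le_min ?_ ?_⟩
      · exact (he0min e1 (List.mem_toFinset.mpr he1p)).trans he1w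
      · exact (he0min e2 (List.mem_toFinset.mpr he2p)).trans he2w
    have hqpos : 0 < q := hq
    have hne : (Finset.univ : Finset (Fin q)).Nonempty := ⟨⟨0, hqpos⟩, Finset.mem_univ _⟩
    obtain ⟨F'', hF''E, hF''card, hF''sep, hF''inv, hF''sum⟩ :=
      key_lemma hH wH t' b Finset.univ hne hpair
    have hF''card' : F''.card = q - 1 := by
      rw [hF''card, Finset.card_univ, Fintype.card_fin]
    have hmin := hFmin F'' hF''E hF''card'
      ⟨t', ht'T, fun i j hij => hF''sep i (Finset.mem_univ _) j (Finset.mem_univ _) hij⟩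
    obtain ⟨m, hm, hmmax⟩ := Finset.exists_max_image Finset.univ b hne
    have hsum'' := hF''sum m hm (fun i _ => hmmax i (Finset.mem_univ _))
    -- ∑ b ≤ 2 * ∑ C w
    have hVdisj : ∀ i j, i ≠ j → ∀ z, z ∈ Vv i → z ∈ Vv j → False := by
      intro i j hij z hzi hzj
      exact hsep i j hij (hzi.trans hzj.symm)
    have hmemB : ∀ (i : Fin q) (u v : V), s(u, v) ∈ Bi i → u ∈ Vv i ∨ v ∈ Vv i := by
      intro i u v hmem
      obtain ⟨-, u', hu', v', hv', heq⟩ := boundary_elim (G := G) (S := Vv i) hmem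
      rcases Sym2.eq_iff.mp heq with ⟨rfl, rfl⟩ | ⟨rfl, rfl⟩
      · exact Or.inl hu'
      · exact Or.inr hu'
    have hb2 : ∑ i, b i ≤ 2 * ∑ e ∈ C, w e := by
      have step1 : ∀ i, b i = ∑ e ∈ C, (if e ∈ Bi i then w e else 0) := by
        intro i
        rw [hb]
        simp only
        rw [Finset.sum_ite_mem, Finset.inter_eq_right.mpr (hBC i)]
      calc ∑ i, b i = ∑ e ∈ C, ∑ i, (if e ∈ Bi i then w e else 0) := by
            rw [Finset.sum_comm]
            exact Finset.sum_congr rfl fun i _ => step1 i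
        _ ≤ ∑ e ∈ C, 2 * w e := by
            refine Finset.sum_le_sum ?_
            intro e heC
            rw [← Finset.sum_filter]
            rw [Finset.sum_const]
            have hcard2 : (Finset.univ.filter (fun i => e ∈ Bi i)).card ≤ 2 := by
              by_contra hgt
              push_neg at hgt
              obtain ⟨i1, hi1, i2, hi2, i3, hi3, h12, h13, h23⟩ :=
                Finset.two_lt_card.mp hgt
              rw [Finset.mem_filter] at hi1 hi2 hi3
              obtain ⟨u, v, rfl⟩ := sym2_rep e
              rcases hmemB i1 u v hi1.2 with h1 | h1 <;>
                rcases hmemB i2 u v hi2.2 with h2 | h2 <;>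
                rcases hmemB i3 u v hi3.2 with h3 | h3
              · exact hVdisj i1 i2 h12 u h1 h2
              · exact hVdisj i1 i2 h12 u h1 h2
              · exact hVdisj i1 i3 h13 u h1 h3
              · exact hVdisj i2 i3 h23 v h2 h3
              · exact hVdisj i2 i3 h23 u h2 h3
              · exact hVdisj i1 i3 h13 v h1 h3
              · exact hVdisj i1 i2 h12 v h1 h2
              · exact hVdisj i1 i2 h12 v h1 h2
            rw [nsmul_eq_mul]
            exact mul_le_mul_of_nonneg_right (by exact_mod_cast hcard2) (hw e)
        _ = 2 * ∑ e ∈ C, w e := by rw [Finset.mul_sum]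
    -- ∑ over biUnion ≤ ∑ F wH
    have hbiU : ∑ e ∈ F.biUnion U, w e ≤ ∑ e ∈ F, wH e := by
      calc ∑ e ∈ F.biUnion U, w e ≤ ∑ e ∈ F, ∑ x ∈ U e, w x :=
            sum_biUnion_le' F U w hw
        _ = ∑ e ∈ F, wH e := by
            refine Finset.sum_congr rfl ?_
            intro e he
            obtain ⟨a, c, rfl⟩ := sym2_rep e
            exact (hside a c (H.mem_edgeSet.mp (hFE (Finset.mem_coe.mpr he)))).2
    -- numeric wrap-up
    have hqR : (1 : ℝ) ≤ (q : ℝ) := by exact_mod_cast hq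
    have hq0 : (0 : ℝ) < (q : ℝ) := by linarith
    have havg : ∑ i, b i ≤ (q : ℝ) * b m := by
      calc ∑ i, b i ≤ ∑ _i : Fin q, b m :=
            Finset.sum_le_sum (fun i _ => hmmax i (Finset.mem_univ _))
        _ = (q : ℝ) * b m := by
            rw [Finset.sum_const, Finset.card_univ, Fintype.card_fin, nsmul_eq_mul]
    have hbm : (∑ i, b i) / (q : ℝ) ≤ b m := by
      rw [div_le_iff₀ hq0]
      linarith
    have hSC : (0 : ℝ) ≤ ∑ e ∈ C, w e := Finset.sum_nonneg (fun e _ => hw e)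
    have h1q : (0 : ℝ) ≤ 1 - 1 / (q : ℝ) := by
      have : 1 / (q : ℝ) ≤ 1 := by
        rw [div_le_one hq0]; exact hqR
      linarith
    calc ∑ e ∈ F.biUnion U, w e ≤ ∑ e ∈ F, wH e := hbiU
      _ ≤ ∑ e ∈ F'', wH e := hmin
      _ ≤ ∑ i, b i - b m := hsum''
      _ ≤ ∑ i, b i - (∑ i, b i) / (q : ℝ) := by linarith
      _ = (1 - 1 / (q : ℝ)) * ∑ i, b i := by ring
      _ ≤ (1 - 1 / (q : ℝ)) * (2 * ∑ e ∈ C, w e) := by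
          exact mul_le_mul_of_nonneg_left hb2 h1q
      _ = (2 - 2 / (q : ℝ)) * ∑ e ∈ C, w e := by ring
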